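/- Let A be a T-brace whose additive group (A,+) is torsion-free. If A is Smoktunowicz-nilpotent, then A is abelian, i.e., a ⋆ b = 0 for all a,b ∈ A. -/
import Mathlib


/-!
Basic theory of left braces (skew left braces of abelian type), following
Dixon–Kurdachenko–Subbotin, "On the structure of braces whose subideals are ideals".
-/

universe u v

/-- A left brace: an abelian group `(A,+)`, a group `(A,·)`, satisfying
`a(b+c) = ab + ac - a`.  (The additive and multiplicative identities then coincide.) -/
class LeftBrace (A : Type u) extends AddCommGroup A, Group A where
  mul_add_eq : ∀ a b c : A, a * (b + c) = a * b + a * c - a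

namespace LeftBrace

variable {A : Type u} [LeftBrace A]

/-- The star operation `a ⋆ b = ab - a - b`. -/
def bstar (a b : A) : A := a * b - a - b

/-- A subset of a left brace is a subbrace if it is closed under the additive-group
and multiplicative-group operations (equivalently, it is a left brace under the
restricted operations). -/
structure IsSubbrace (S : Set A) : Prop where
  zero_mem : (0 : A) ∈ S
  add_mem : ∀ {a b : A}, a ∈ S → b ∈ S → a + b ∈ S
  neg_mem : ∀ {a : A}, a ∈ S → -a ∈ S
  mul_mem : ∀ {a b : A}, a ∈ S → b ∈ S → a * b ∈ S
  inv_mem : ∀ {a : A}, a ∈ S → a⁻¹ ∈ S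

/-- `I` is an ideal of the subbrace `J`: `I ⊆ J`, both are subbraces, and
`a ⋆ z, z ⋆ a ∈ I` for all `a ∈ J`, `z ∈ I`. -/
structure IsIdealIn (I J : Set A) : Prop where
  subset : I ⊆ J
  subbrace : IsSubbrace I
  ambient_subbrace : IsSubbrace J
  star_mem_left : ∀ a ∈ J, ∀ z ∈ I, bstar a z ∈ I
  star_mem_right : ∀ a ∈ J, ∀ z ∈ I, bstar z a ∈ I

/-- `I` is an ideal of the brace `A`. -/
def IsIdeal (I : Set A) : Prop := IsIdealIn I (Set.univ : Set A)

/-- `A` is a T-brace if being an ideal is a transitive relation: an ideal of an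
ideal of `A` is an ideal of `A`. -/
def IsTBrace (A : Type u) [LeftBrace A] : Prop :=
  ∀ I J : Set A, IsIdealIn I J → IsIdeal J → IsIdeal I

/-- The `⋆`-center `ζ(⋆,A) = {a | a ⋆ x = x ⋆ a = 0 for all x}`. -/
def starCenter (A : Type u) [LeftBrace A] : Set A :=
  {a : A | ∀ x : A, bstar a x = 0 ∧ bstar x a = 0}

/-- The preimage in `A` of the `⋆`-center of the quotient of `A` by (the ideal) `S`:
`a` belongs to it iff `a ⋆ x ∈ S` and `x ⋆ a ∈ S` for every `x ∈ A`. -/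
def nextCenter (A : Type u) [LeftBrace A] (S : Set A) : Set A :=
  {a : A | ∀ x : A, bstar a x ∈ S ∧ bstar x a ∈ S}

/-- The upper `⋆`-central series, indexed by naturals:
`ζ₀(⋆,A) = 0` and `ζ_{n+1}(⋆,A)/ζ_n(⋆,A) = ζ(⋆, A/ζ_n(⋆,A))`. -/
def zetaNat (A : Type u) [LeftBrace A] : ℕ → Set A
  | 0 => ({0} : Set A)
  | n + 1 => nextCenter A (zetaNat A n)

/-- The upper `⋆`-central series, indexed by ordinals (unions at limit ordinals). -/
noncomputable def zetaOrd (A : Type u) [LeftBrace A] (o : Ordinal.{v}) : Set A :=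
  Ordinal.limitRecOn o (({0} : Set A))
    (fun _ ih => nextCenter A ih)
    (fun o _ ih => ⋃ (o' : Ordinal) (h : o' < o), ih o' h)

/-- The upper `⋆`-hypercenter `ζ_∞(⋆,A)`: the final (stable) term of the upper
`⋆`-central series, i.e. the union of all its terms. -/
noncomputable def starHypercenter (A : Type u) [LeftBrace A] : Set A :=
  ⋃ o : Ordinal.{u}, zetaOrd A o

/-- `A` is `⋆`-hypercentral if `A = ζ_γ(⋆,A)` for some ordinal `γ`. -/
def IsStarHypercentral (A : Type u) [LeftBrace A] : Prop :=
  ∃ γ : Ordinal.{u}, zetaOrd A γ = (Set.univ : Set A)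

/-- `K ⋆ L`: the additive subgroup of `(A,+)` generated by all `x ⋆ y`, `x ∈ K`, `y ∈ L`. -/
def setStar (K L : Set A) : AddSubgroup A :=
  AddSubgroup.closure {z : A | ∃ x ∈ K, ∃ y ∈ L, z = bstar x y}

/-- `rightStarSeries A n = A^{(n+1)}`, where `A^{(1)} = A` and `A^{(n+1)} = A^{(n)} ⋆ A`. -/
def rightStarSeries (A : Type u) [LeftBrace A] : ℕ → Set A
  | 0 => (Set.univ : Set A)
  | n + 1 => ((setStar (rightStarSeries A n) (Set.univ : Set A) : AddSubgroup A) : Set A)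

/-- `leftStarSeries A n = A^{n+1}`, where `A^1 = A` and `A^{n+1} = A ⋆ A^n`. -/
def leftStarSeries (A : Type u) [LeftBrace A] : ℕ → Set A
  | 0 => (Set.univ : Set A)
  | n + 1 => ((setStar (Set.univ : Set A) (leftStarSeries A n) : AddSubgroup A) : Set A)

/-- `A` is Smoktunowicz-nilpotent if `A^{(n)} = A^k = 0` for some naturals `n, k`. -/
def IsSmoktunowiczNilpotent (A : Type u) [LeftBrace A] : Prop :=
  ∃ n k : ℕ, rightStarSeries A n = ({0} : Set A) ∧ leftStarSeries A k = ({0} : Set A)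

/-- The subbrace generated by a subset `M`: the intersection of all subbraces containing `M`. -/
def braceClosure (M : Set A) : Set A := ⋂₀ {S : Set A | IsSubbrace S ∧ M ⊆ S}

theorem mul_zero' (a : A) : a * 0 = a := by
  have h := mul_add_eq a 0 0
  rw [add_zero] at h
  linear_combination (norm := abel) -h

theorem one_eq_zero : (1 : A) = 0 := by
  have h := mul_zero' (1 : A)
  rw [one_mul] at h
  exact h.symm

theorem zero_mul' (a : A) : 0 * a = a := by
  rw [← one_eq_zero, one_mul]

theorem mul_eq (a b : A) : a * b = a + b + bstar a b := by
  simp only [bstar]; abel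

theorem star_add (a b c : A) : bstar a (b + c) = bstar a b + bstar a c := by
  simp only [bstar, mul_add_eq]; abel

theorem star_zero (a : A) : bstar a 0 = 0 := by simp [bstar, mul_zero']

theorem zero_star (a : A) : bstar 0 a = 0 := by simp [bstar, zero_mul']

def starHom (a : A) : A →+ A where
  toFun := bstar a
  map_zero' := star_zero a
  map_add' := star_add a

theorem star_neg (a b : A) : bstar a (-b) = -(bstar a b) :=
  map_neg (starHom a) b

theorem star_zsmul (a : A) (n : ℤ) (b : A) : bstar a (n • b) = n • bstar a b :=
  map_zsmul (starHom a) n b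

theorem star_nsmul (a : A) (n : ℕ) (b : A) : bstar a (n • b) = n • bstar a b :=
  map_nsmul (starHom a) n b

def lam (a : A) : AddMonoid.End A where
  toFun b := a * b - a
  map_zero' := by show a * 0 - a = 0; rw [mul_zero', sub_self]
  map_add' b c := by show a * (b + c) - a = (a * b - a) + (a * c - a); rw [mul_add_eq]; abel

theorem lam_apply (a b : A) : lam a b = a * b - a := rfl

theorem lam_apply' (a b : A) : lam a b = b + bstar a b := by
  rw [lam_apply, bstar]; abel

theorem lam_mul (a b : A) : lam (a * b) = lam a * lam b := by
  refine AddMonoidHom.ext fun c => ?_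
  show (a*b) * c - (a*b) = a * (b * c - b) - a
  have : b * c - b = (b*c) + (-b) := by abel
  rw [this]
  have h2 : a * ((b*c) + (-b)) = a * (b*c) + a * (-b) - a := mul_add_eq a _ _
  have h3 : a * (b + (-b)) = a * b + a * (-b) - a := mul_add_eq a _ _
  rw [add_neg_cancel, mul_zero'] at h3
  rw [mul_assoc]
  linear_combination (norm := abel) h3 - h2

theorem lam_zero : lam (0 : A) = 1 := by
  refine AddMonoidHom.ext fun b => ?_
  show 0 * b - 0 = b
  rw [zero_mul', sub_zero]

theorem lam_one : lam (1 : A) = 1 := by rw [one_eq_zero]; exact lam_zero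

theorem lam_inv_lam (a : A) (b : A) : lam a⁻¹ (lam a b) = b := by
  have h : lam (a⁻¹ * a) = lam a⁻¹ * lam a := lam_mul _ _
  rw [inv_mul_cancel, lam_one] at h
  calc lam a⁻¹ (lam a b) = (lam a⁻¹ * lam a) b := rfl
  _ = (1 : AddMonoid.End A) b := by rw [← h]
  _ = b := rfl

theorem lam_lam_inv (a : A) (b : A) : lam a (lam a⁻¹ b) = b := by
  have h : lam (a * a⁻¹) = lam a * lam a⁻¹ := lam_mul _ _
  rw [mul_inv_cancel, lam_one] at h
  calc lam a (lam a⁻¹ b) = (lam a * lam a⁻¹) b := rfl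
  _ = (1 : AddMonoid.End A) b := by rw [← h]
  _ = b := rfl

theorem star_mul_left (a b c : A) :
    bstar (a * b) c = bstar a (bstar b c) + bstar a c + bstar b c := by
  have h1 : lam (a*b) c = lam a (lam b c) := by rw [lam_mul]; rfl
  rw [lam_apply' (a*b), lam_apply' b, map_add, lam_apply' a c, lam_apply' a (bstar b c)] at h1
  linear_combination (norm := abel) h1

/-- `a⁻¹ = -a - a⋆a⁻¹`. -/
theorem inv_eq (a : A) : a⁻¹ = -a - bstar a a⁻¹ := by
  have h : a * a⁻¹ = a + a⁻¹ + bstar a a⁻¹ := mul_eq a a⁻¹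
  rw [mul_inv_cancel, one_eq_zero] at h
  linear_combination (norm := abel) -h

theorem inv_star (a b : A) : bstar a⁻¹ b = -(bstar a (lam a⁻¹ b)) := by
  have h : lam a (lam a⁻¹ b) = b := lam_lam_inv a b
  rw [lam_apply' a] at h
  have h2 : bstar a⁻¹ b = lam a⁻¹ b - b := by rw [lam_apply']; abel
  rw [h2]
  linear_combination (norm := abel) h

/-- `u + c = u * (lam u⁻¹ c)`. -/
theorem add_eq_mul (u c : A) : u + c = u * (lam u⁻¹ c) := by
  have h : lam u (lam u⁻¹ c) = c := lam_lam_inv u c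
  rw [lam_apply] at h
  linear_combination (norm := abel) -h

/-- expansion of `(u + c) ⋆ b` using `d = λ_{u⁻¹} c`. -/
theorem star_add_left_eq (u c b : A) :
    bstar (u + c) b
      = bstar u (bstar (lam u⁻¹ c) b) + bstar u b + bstar (lam u⁻¹ c) b := by
  rw [add_eq_mul u c, star_mul_left]

section IdealLemmas

variable {A : Type u} [LeftBrace A]

/-- The additive subgroup underlying a subbrace. -/
def IsSubbrace.addSubgroup {S : Set A} (hS : IsSubbrace S) : AddSubgroup A where
  carrier := S
  zero_mem' := hS.zero_mem
  add_mem' := hS.add_mem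
  neg_mem' := hS.neg_mem

variable {Z : Set A}

theorem IsIdeal.star_left (hZ : IsIdeal Z) (a : A) {z : A} (hz : z ∈ Z) :
    bstar a z ∈ Z :=
  hZ.star_mem_left a trivial z hz

theorem IsIdeal.star_right (hZ : IsIdeal Z) (a : A) {z : A} (hz : z ∈ Z) :
    bstar z a ∈ Z :=
  hZ.star_mem_right a trivial z hz

theorem IsIdeal.add_mem' (hZ : IsIdeal Z) {x y : A} (hx : x ∈ Z) (hy : y ∈ Z) :
    x + y ∈ Z := hZ.subbrace.add_mem hx hy

theorem IsIdeal.neg_mem' (hZ : IsIdeal Z) {x : A} (hx : x ∈ Z) : -x ∈ Z :=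
  hZ.subbrace.neg_mem hx

theorem IsIdeal.zero_mem' (hZ : IsIdeal Z) : (0:A) ∈ Z := hZ.subbrace.zero_mem

theorem IsIdeal.sub_mem' (hZ : IsIdeal Z) {x y : A} (hx : x ∈ Z) (hy : y ∈ Z) :
    x - y ∈ Z := by
  rw [sub_eq_add_neg]; exact hZ.add_mem' hx (hZ.neg_mem' hy)

theorem IsIdeal.zsmul_mem (hZ : IsIdeal Z) {x : A} (hx : x ∈ Z) (n : ℤ) :
    n • x ∈ Z :=
  AddSubgroup.zsmul_mem hZ.subbrace.addSubgroup hx n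

theorem IsIdeal.nsmul_mem (hZ : IsIdeal Z) {x : A} (hx : x ∈ Z) (n : ℕ) :
    n • x ∈ Z :=
  AddSubgroup.nsmul_mem hZ.subbrace.addSubgroup hx n

theorem IsIdeal.lam_mem (hZ : IsIdeal Z) (a : A) {z : A} (hz : z ∈ Z) :
    lam a z ∈ Z := by
  rw [lam_apply']
  exact hZ.add_mem' hz (hZ.star_left a hz)

/-- If `c ∈ Z` (ideal), then `(u+c)⋆b ≡ u⋆b (mod Z)`: the difference lies in `Z`. -/
theorem IsIdeal.star_add_left_sub_mem (hZ : IsIdeal Z) (u b : A) {c : A} (hc : c ∈ Z) :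
    bstar (u + c) b - bstar u b ∈ Z := by
  rw [star_add_left_eq u c b]
  have hd : lam u⁻¹ c ∈ Z := hZ.lam_mem u⁻¹ hc
  have h1 : bstar (lam u⁻¹ c) b ∈ Z := hZ.star_right b hd
  have h2 : bstar u (bstar (lam u⁻¹ c) b) ∈ Z := hZ.star_left u h1
  have := hZ.add_mem' h2 h1
  convert this using 1
  abel

/-- Membership in the "left kernel mod Z": all left stars land in `Z`. -/

theorem neg_mem_leftKer (hZ : IsIdeal Z) {z : A} (h : ∀ b, bstar z b ∈ Z) :
    ∀ b, bstar (-z) b ∈ Z := by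
  intro b
  have hinv : ∀ b, bstar z⁻¹ b ∈ Z := by
    intro b
    rw [inv_star]
    exact hZ.neg_mem' (h _)
  have hc : bstar z z⁻¹ ∈ Z := h _
  have hzeq : -z = z⁻¹ + bstar z z⁻¹ := by
    have := inv_eq z
    linear_combination (norm := abel) -this
  rw [hzeq]
  have hsub := hZ.star_add_left_sub_mem z⁻¹ b hc
  have := hZ.add_mem' hsub (hinv b)
  convert this using 1
  abel

theorem add_mem_leftKer (hZ : IsIdeal Z) {z w : A}
    (hzk : ∀ b, bstar z b ∈ Z) (hwk : ∀ b, bstar w b ∈ Z) :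
    ∀ b, bstar (z + w) b ∈ Z := by
  intro b
  have hmul : ∀ b, bstar (z * w) b ∈ Z := by
    intro b
    rw [star_mul_left]
    exact hZ.add_mem' (hZ.add_mem' (hzk _) (hzk _)) (hwk _)
  have hc : -(bstar z w) ∈ Z := hZ.neg_mem' (hzk w)
  have hzw : z + w = z * w + -(bstar z w) := by
    have := mul_eq z w
    linear_combination (norm := abel) -this
  rw [hzw]
  have hsub := hZ.star_add_left_sub_mem (z * w) b hc
  have := hZ.add_mem' hsub (hmul b)
  convert this using 1
  abel

theorem inv_mem_leftKer (hZ : IsIdeal Z) {z : A} (h : ∀ b, bstar z b ∈ Z) :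
    ∀ b, bstar z⁻¹ b ∈ Z := by
  intro b
  rw [inv_star]
  exact hZ.neg_mem' (h _)

end IdealLemmas
section Kernel

variable {A : Type u} [LeftBrace A] {Z : Set A}

/-- The set of elements all of whose left stars land in `Z`. -/
def leftKer (Z : Set A) : Set A := {z : A | ∀ b, bstar z b ∈ Z}

theorem leftKer_subset (hZ : IsIdeal Z) : Z ⊆ leftKer Z :=
  fun _z hz _b => hZ.star_right _ hz

/-- Conjugates `a * z * a⁻¹` of elements of `leftKer Z` stay in `leftKer Z`. -/
theorem conj_mem_leftKer (hZ : IsIdeal Z) {z : A} (hz : z ∈ leftKer Z) (a : A) :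
    a * z * a⁻¹ ∈ leftKer Z := by
  intro b
  have hw : bstar (a * z * a⁻¹) b = lam a (bstar z (lam a⁻¹ b)) := by
    have h1 : lam (a * z * a⁻¹) b = lam a (lam z (lam a⁻¹ b)) := by
      rw [lam_mul, lam_mul]; rfl
    have h2 : lam z (lam a⁻¹ b) = lam a⁻¹ b + bstar z (lam a⁻¹ b) := lam_apply' _ _
    rw [h2, map_add, lam_lam_inv] at h1
    have h3 : bstar (a * z * a⁻¹) b = lam (a * z * a⁻¹) b - b := by
      rw [lam_apply']; abel
    rw [h3, h1]; abel
  rw [hw]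
  exact hZ.lam_mem a (hz _)

theorem IsSubbrace.leftKer (hZ : IsIdeal Z) : IsSubbrace (leftKer Z) where
  zero_mem := fun b => by rw [zero_star]; exact hZ.zero_mem'
  add_mem := fun hz hw => add_mem_leftKer hZ hz hw
  neg_mem := fun hz => neg_mem_leftKer hZ hz
  mul_mem := by
    intro z w hz hw
    have : z * w = z + w + bstar z w := mul_eq z w
    rw [this]
    exact add_mem_leftKer hZ (add_mem_leftKer hZ hz hw) (leftKer_subset hZ (hz w))
  inv_mem := fun hz => inv_mem_leftKer hZ hz

theorem IsSubbrace.univ : IsSubbrace (Set.univ : Set A) where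
  zero_mem := trivial
  add_mem := fun _ _ => trivial
  neg_mem := fun _ => trivial
  mul_mem := fun _ _ => trivial
  inv_mem := fun _ => trivial

theorem IsIdeal.leftKer (hZ : IsIdeal Z) : IsIdeal (LeftBrace.leftKer Z) where
  subset := Set.subset_univ _
  subbrace := IsSubbrace.leftKer hZ
  ambient_subbrace := IsSubbrace.univ
  star_mem_right := fun a _ z hz => leftKer_subset hZ (hz a)
  star_mem_left := by
    intro a _ z hz
    obtain ⟨w, hwdef⟩ : ∃ w, w = a * z * a⁻¹ := ⟨_, rfl⟩
    have hw : w ∈ LeftBrace.leftKer Z := hwdef ▸ conj_mem_leftKer hZ hz a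
    have key : bstar a z = w + bstar w a + -z := by
      have h1 : w * a = a * z := by
        rw [hwdef, mul_assoc, inv_mul_cancel, mul_one]
      have h2 : w * a = w + a + bstar w a := mul_eq _ _
      have h3 : a * z = a + z + bstar a z := mul_eq _ _
      rw [h1, h3] at h2
      linear_combination (norm := abel) h2
    rw [key]
    exact (IsSubbrace.leftKer hZ).add_mem
      ((IsSubbrace.leftKer hZ).add_mem hw (leftKer_subset hZ (hw a)))
      ((IsSubbrace.leftKer hZ).neg_mem hz)

theorem mem_nextCenter {S : Set A} {z : A} :
    z ∈ nextCenter A S ↔ ∀ x, bstar z x ∈ S ∧ bstar x z ∈ S := Iff.rfl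

theorem nextCenter_subset_leftKer (S : Set A) : nextCenter A S ⊆ leftKer S :=
  fun _z hz b => (hz b).1

theorem subset_nextCenter (hZ : IsIdeal Z) : Z ⊆ nextCenter A Z :=
  fun _z hz _x => ⟨hZ.star_right _ hz, hZ.star_left _ hz⟩

theorem add_mem_nextCenter (hZ : IsIdeal Z) {z w : A}
    (hz : z ∈ nextCenter A Z) (hw : w ∈ nextCenter A Z) : z + w ∈ nextCenter A Z := by
  intro x
  refine ⟨add_mem_leftKer hZ (fun b => (hz b).1) (fun b => (hw b).1) x, ?_⟩
  rw [star_add]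
  exact hZ.add_mem' (hz x).2 (hw x).2

theorem neg_mem_nextCenter (hZ : IsIdeal Z) {z : A}
    (hz : z ∈ nextCenter A Z) : -z ∈ nextCenter A Z := by
  intro x
  refine ⟨neg_mem_leftKer hZ (fun b => (hz b).1) x, ?_⟩
  rw [star_neg]
  exact hZ.neg_mem' (hz x).2

theorem IsIdeal.nextCenter (hZ : IsIdeal Z) : IsIdeal (nextCenter A Z) := by
  have hsub : IsSubbrace (LeftBrace.nextCenter A Z) := by
    constructor
    · intro x
      rw [zero_star, star_zero]
      exact ⟨hZ.zero_mem', hZ.zero_mem'⟩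
    · exact fun hz hw => add_mem_nextCenter hZ hz hw
    · exact fun hz => neg_mem_nextCenter hZ hz
    · intro z w hz hw
      rw [mul_eq z w]
      exact add_mem_nextCenter hZ (add_mem_nextCenter hZ hz hw)
        (subset_nextCenter hZ (hz w).1)
    · intro z hz x
      refine ⟨inv_mem_leftKer hZ (fun b => (hz b).1) x, ?_⟩
      have : z⁻¹ = -z - bstar z z⁻¹ := inv_eq z
      rw [this, sub_eq_add_neg, star_add, star_neg, star_neg]
      exact hZ.add_mem' (hZ.neg_mem' (hz x).2) (hZ.neg_mem' (hZ.star_left x (hz z⁻¹).1))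
  exact {
    subset := Set.subset_univ _
    subbrace := hsub
    ambient_subbrace := IsSubbrace.univ
    star_mem_left := fun a _ z hz => subset_nextCenter hZ (hz a).2
    star_mem_right := fun a _ z hz => subset_nextCenter hZ (hz a).1 }

theorem IsIdeal.zero_set : IsIdeal ({0} : Set A) where
  subset := Set.subset_univ _
  subbrace := {
    zero_mem := rfl
    add_mem := by rintro a b rfl rfl; simp
    neg_mem := by rintro a rfl; simp
    mul_mem := by rintro a b rfl rfl; simp [mul_zero']
    inv_mem := by rintro a rfl; simp [← one_eq_zero] }
  ambient_subbrace := IsSubbrace.univ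
  star_mem_left := by rintro a - z rfl; simp [star_zero]
  star_mem_right := by rintro a - z rfl; simp [zero_star]

theorem IsIdeal.zetaNat : ∀ j, IsIdeal (zetaNat A j)
  | 0 => IsIdeal.zero_set
  | (j+1) => (IsIdeal.zetaNat j).nextCenter

end Kernel
section TorsionFree

variable {A : Type u} [LeftBrace A] {Z : Set A}

/-- `μ_z = λ_z - 1`, so `μ_z b = z ⋆ b`. -/
def mu (z : A) : AddMonoid.End A := lam z - 1

theorem mu_apply (z b : A) : mu z b = bstar z b := by
  show lam z b - b = bstar z b
  rw [lam_apply, bstar]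

theorem end_mul_apply (f g : AddMonoid.End A) (b : A) : (f * g) b = f (g b) := rfl

theorem mu_pow_mem_lSS (z : A) : ∀ (t : ℕ) (b : A), ((mu z)^t) b ∈ leftStarSeries A t
  | 0, b => trivial
  | (t+1), b => by
    have h : (mu z)^(t+1) = mu z * (mu z)^t := by rw [pow_succ']
    rw [h, end_mul_apply, mu_apply]
    show _ ∈ ((setStar (Set.univ : Set A) (leftStarSeries A t) : AddSubgroup A) : Set A)
    exact AddSubgroup.subset_closure ⟨z, trivial, _, mu_pow_mem_lSS z t b, rfl⟩

theorem lam_pow (z : A) : ∀ m : ℕ, lam (z^m) = (lam z)^m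
  | 0 => by rw [pow_zero, pow_zero, lam_one]
  | (m+1) => by rw [pow_succ, lam_mul, lam_pow z m, pow_succ]

theorem star_pow_expand (z : A) (m : ℕ) (b : A) :
    bstar (z^m) b = ∑ i ∈ Finset.range m, (m.choose (i+1)) • ((mu z)^(i+1)) b := by
  have hcomm : Commute (mu z) (1 : AddMonoid.End A) := Commute.one_right _
  have h := hcomm.add_pow m
  have hlz : lam z = mu z + 1 := by rw [mu]; abel
  have h2 : ((lam z)^m) b = ∑ i ∈ Finset.range (m+1), (m.choose i) • ((mu z)^i) b := by
    rw [hlz, h]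
    have : ∀ i ∈ Finset.range (m+1),
        ((mu z)^i * (1:AddMonoid.End A)^(m-i) * (m.choose i : AddMonoid.End A)) b
          = (m.choose i) • ((mu z)^i) b := by
      intro i _
      rw [one_pow, mul_one, end_mul_apply]
      have : ((m.choose i : ℕ) : AddMonoid.End A) b = (m.choose i) • b := by
        simp [AddMonoid.End.natCast_apply]
      rw [this, map_nsmul]
    calc (∑ i ∈ Finset.range (m+1),
          (mu z)^i * (1:AddMonoid.End A)^(m-i) * (m.choose i : AddMonoid.End A)) b
        = ∑ i ∈ Finset.range (m+1),
          ((mu z)^i * (1:AddMonoid.End A)^(m-i) * (m.choose i : AddMonoid.End A)) b := by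
          exact map_sum (AddMonoidHom.eval b) _ _
      _ = _ := Finset.sum_congr rfl this
  have h3 : bstar (z^m) b = ((lam z)^m) b - b := by
    rw [← lam_pow]
    rw [lam_apply']
    abel
  rw [h3, h2, Finset.sum_range_succ']
  simp

/-- Torsion-freeness relative to a subset. -/
def TFRel (Z : Set A) : Prop := ∀ (x : A) (n : ℤ), n ≠ 0 → n • x ∈ Z → x ∈ Z

theorem tf_zero (hfree : ∀ a : A, a ≠ 0 → ¬ IsOfFinAddOrder a) :
    TFRel ({0} : Set A) := by
  intro x n hn hx
  by_contra hx0
  refine hfree x hx0 ?_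
  rw [Set.mem_singleton_iff] at hx
  have : (n.natAbs) • x = 0 := by
    rcases Int.natAbs_eq n with h | h
    · rw [← natCast_zsmul, ← h, hx]
    · rw [← natCast_zsmul, ← neg_neg ((n.natAbs : ℤ)), ← h, neg_zsmul, hx, neg_zero]
  exact isOfFinAddOrder_iff_nsmul_eq_zero.2 ⟨n.natAbs, Nat.pos_of_ne_zero (Int.natAbs_ne_zero.2 hn), this⟩

theorem tf_step {K : ℕ} (hK : leftStarSeries A K = {0})
    (hZ : IsIdeal Z) (htf : TFRel Z) : TFRel (nextCenter A Z) := by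
  intro z n hn hmem
  -- right stars
  have hrz : ∀ b, bstar b z ∈ Z := by
    intro b
    refine htf _ n hn ?_
    rw [← star_zsmul]
    exact (hmem b).2
  -- left stars of n • z
  have hlz : ∀ b, bstar (n • z) b ∈ Z := fun b => (hmem b).1
  set m : ℕ := n.natAbs with hmdef
  have hm0 : m ≠ 0 := Int.natAbs_ne_zero.2 hn
  have hlzm : ∀ b, bstar ((m : ℕ) • z) b ∈ Z := by
    rcases Int.natAbs_eq n with h | h
    · intro b
      have : (m : ℕ) • z = n • z := by rw [← natCast_zsmul, ← h]
      rw [this]; exact hlz b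
    · intro b
      have hmn : ((m:ℕ):ℤ) = -n := by omega
      have : (m : ℕ) • z = -(n • z) := by
        rw [← natCast_zsmul, hmn, neg_zsmul]
      rw [this]
      exact neg_mem_leftKer hZ hlz b
  -- z^m = m • z + c
  have hpow : ∀ j : ℕ, ∃ c ∈ Z, z^j = j • z + c := by
    intro j
    induction j with
    | zero => exact ⟨0, hZ.zero_mem', by rw [pow_zero, one_eq_zero, zero_smul, add_zero]⟩
    | succ j ih =>
      obtain ⟨c, hc, hcz⟩ := ih
      refine ⟨c + bstar (z^j) z, hZ.add_mem' hc (hrz _), ?_⟩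
      rw [pow_succ, mul_eq, hcz, succ_nsmul]
      abel
  obtain ⟨c, hc, hzm⟩ := hpow m
  have hkzm : ∀ b, bstar (z^m) b ∈ Z := by
    intro b
    rw [hzm]
    have h1 := hZ.star_add_left_sub_mem ((m:ℕ) • z) b hc
    have h2 := hlzm b
    have := hZ.add_mem' h1 h2
    convert this using 1
    abel
  -- binomial relation: for every b, sum ∈ Z
  have hbin : ∀ b, ∑ i ∈ Finset.range m, (m.choose (i+1)) • ((mu z)^(i+1)) b ∈ Z := by
    intro b
    rw [← star_pow_expand]
    exact hkzm b
  -- descending induction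
  obtain ⟨s, hs⟩ : ∃ s, m = s + 1 := ⟨m - 1, (Nat.succ_pred_eq_of_pos (Nat.pos_of_ne_zero hm0)).symm⟩
  have hstep : ∀ t : ℕ, (∀ b, ((mu z)^(t+2)) b ∈ Z) → ∀ b, ((mu z)^(t+1)) b ∈ Z := by
    intro t ih b
    have hrel := hbin (((mu z)^t) b)
    rw [hs, Finset.sum_range_succ'] at hrel
    simp only [zero_add, pow_one, Nat.choose_one_right] at hrel
    have hrest : ∑ i ∈ Finset.range s, ((s+1).choose (i+1+1)) • ((mu z)^(i+1+1)) (((mu z)^t) b) ∈ Z := by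
      refine AddSubgroup.sum_mem hZ.subbrace.addSubgroup ?_
      intro i _
      refine AddSubgroup.nsmul_mem hZ.subbrace.addSubgroup ?_ _
      have hexp : i+1+1+t = t+2+i := by omega
      have : ((mu z)^(i+1+1)) (((mu z)^t) b) = ((mu z)^(t+2)) (((mu z)^i) b) := by
        rw [← end_mul_apply, ← end_mul_apply, ← pow_add, ← pow_add, hexp]
      rw [this]
      exact ih _
    have hfirst : (s+1) • (mu z) (((mu z)^t) b) ∈ Z := by
      have h2 := hZ.sub_mem' hrel hrest
      rwa [add_sub_cancel_left] at h2
    have hpt : (mu z) (((mu z)^t) b) = ((mu z)^(t+1)) b := by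
      rw [← end_mul_apply, ← pow_succ']
    rw [hpt] at hfirst
    refine htf _ ((s:ℤ)+1) (by omega) ?_
    have : ((s:ℤ)+1) • ((mu z)^(t+1)) b = (s+1) • ((mu z)^(t+1)) b := by
      rw [← natCast_zsmul]; norm_cast
    rw [this]
    exact hfirst
  have hbase : ∀ t : ℕ, K ≤ t → ∀ b, ((mu z)^(t+1)) b ∈ Z := by
    intro t ht b
    obtain ⟨d, hd⟩ := Nat.exists_eq_add_of_le ht
    have hexp : d+1+K = t+1 := by omega
    have : ((mu z)^(t+1)) b = ((mu z)^(d+1)) (((mu z)^K) b) := by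
      rw [← end_mul_apply, ← pow_add, hexp]
    rw [this]
    have hzk : ((mu z)^K) b = 0 := by
      have := mu_pow_mem_lSS z K b
      rw [hK] at this
      exact this
    rw [hzk, map_zero]
    exact hZ.zero_mem'
  have hall : ∀ (d t : ℕ), K ≤ t + d → ∀ b, ((mu z)^(t+1)) b ∈ Z := by
    intro d
    induction d with
    | zero => intro t ht; exact hbase t (by omega)
    | succ d ih =>
      intro t ht b
      exact hstep t (fun b' => ih (t+1) (by omega) b') b
  have hzleft : ∀ b, bstar z b ∈ Z := by
    intro b
    have := hall K 0 (by omega) b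
    rw [pow_one, mu_apply] at this
    exact this
  exact fun x => ⟨hzleft x, hrz x⟩

theorem tf_zetaNat {K : ℕ} (hK : leftStarSeries A K = {0})
    (hfree : ∀ a : A, a ≠ 0 → ¬ IsOfFinAddOrder a) :
    ∀ j, TFRel (zetaNat A j)
  | 0 => tf_zero hfree
  | (j+1) => tf_step hK (IsIdeal.zetaNat j) (tf_zetaNat hK hfree j)

end TorsionFree
section MainLemma

variable {A : Type u} [LeftBrace A] {Z : Set A}

theorem zsmul_add_mem_leftKer (hZ : IsIdeal Z) {z : A} (hz : z ∈ leftKer Z)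
    (m : ℤ) {c : A} (hc : c ∈ Z) : m • z + c ∈ leftKer Z := by
  have hsb : IsSubbrace (leftKer Z) := IsSubbrace.leftKer hZ
  exact AddSubgroup.add_mem hsb.addSubgroup
    (AddSubgroup.zsmul_mem hsb.addSubgroup hz m) (leftKer_subset hZ hc)

/-- **Key lemma.** In a T-brace with `Z`-torsion-free addition and nilpotent left star
series, every element whose left stars lie in the ideal `Z` is central mod `Z`. -/
theorem leftKer_subset_nextCenter (hT : IsTBrace A) {K : ℕ}
    (hK : leftStarSeries A K = {0}) (hZ : IsIdeal Z) (htf : TFRel Z) :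
    leftKer Z ⊆ nextCenter A Z := by
  intro z hz
  set I : Set A := {x | ∃ m : ℤ, ∃ c ∈ Z, x = m • z + c} with hIdef
  have hZI : Z ⊆ I := fun x hx => ⟨0, x, hx, by simp⟩
  have hIK : I ⊆ leftKer Z := by
    rintro x ⟨m, c, hc, rfl⟩
    exact zsmul_add_mem_leftKer hZ hz m hc
  have hIsub : IsSubbrace I := by
    constructor
    · exact ⟨0, 0, hZ.zero_mem', by simp⟩
    · rintro u v ⟨m, c, hc, rfl⟩ ⟨m', c', hc', rfl⟩
      exact ⟨m + m', c + c', hZ.add_mem' hc hc', by rw [add_zsmul]; abel⟩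
    · rintro u ⟨m, c, hc, rfl⟩
      exact ⟨-m, -c, hZ.neg_mem' hc, by rw [neg_zsmul]; abel⟩
    · rintro u v hu hv
      obtain ⟨m, c, hc, rfl⟩ := hu
      obtain ⟨m', c', hc', rfl⟩ := hv
      have hstar : bstar (m • z + c) (m' • z + c') ∈ Z := hIK ⟨m, c, hc, rfl⟩ _
      refine ⟨m + m', c + c' + bstar (m • z + c) (m' • z + c'),
        hZ.add_mem' (hZ.add_mem' hc hc') hstar, ?_⟩
      rw [mul_eq, add_zsmul]
      abel
    · rintro u ⟨m, c, hc, rfl⟩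
      have hstar : bstar (m • z + c) (m • z + c)⁻¹ ∈ Z := hIK ⟨m, c, hc, rfl⟩ _
      refine ⟨-m, -c - bstar (m • z + c) (m • z + c)⁻¹,
        hZ.sub_mem' (hZ.neg_mem' hc) hstar, ?_⟩
      have h := inv_eq (m • z + c)
      rw [neg_zsmul]
      linear_combination (norm := abel) h
  have hII : IsIdealIn I (leftKer Z) := {
    subset := hIK
    subbrace := hIsub
    ambient_subbrace := IsSubbrace.leftKer hZ
    star_mem_left := fun a ha x _ => hZI (ha x)
    star_mem_right := fun a _ x hx => hZI ((hIK hx) a) }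
  have hI : IsIdeal I := hT I (leftKer Z) hII (hZ.leftKer)
  have hzI : z ∈ I := ⟨1, 0, hZ.zero_mem', by simp⟩
  have haz : ∀ a : A, bstar a z ∈ Z := by
    intro a
    obtain ⟨m, c, hc, heq⟩ := hI.star_left a hzI
    have hiter : ∀ t : ℕ, ∃ d ∈ Z, ((mu a)^t) z = m^t • z + d := by
      intro t
      induction t with
      | zero => exact ⟨0, hZ.zero_mem', by simp⟩
      | succ t ih =>
        obtain ⟨d, hd, hdz⟩ := ih
        refine ⟨m^t • c + bstar a d, hZ.add_mem' (hZ.zsmul_mem hc _) (hZ.star_left a hd), ?_⟩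
        have h1 : ((mu a)^(t+1)) z = (mu a) (((mu a)^t) z) := by
          rw [pow_succ']; rfl
        rw [h1, hdz, mu_apply, star_add, star_zsmul, heq, pow_succ]
        rw [smul_add, smul_smul]
        abel_nf
    obtain ⟨d, hd, hKz⟩ := hiter K
    have hzero : ((mu a)^K) z = 0 := by
      have := mu_pow_mem_lSS a K z
      rw [hK] at this
      exact this
    rw [hzero] at hKz
    by_cases hm : m = 0
    · rw [hm] at heq
      simp at heq
      rw [heq]
      exact hc
    · have hzZ : z ∈ Z := by
        refine htf z (m^K) (pow_ne_zero _ hm) ?_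
        have : m^K • z = -d := by linear_combination (norm := abel) -hKz
        rw [this]
        exact hZ.neg_mem' hd
      exact hZ.star_left a hzZ
  exact fun x => ⟨hz x, haz x⟩

theorem rss_subset_zetaNat (hT : IsTBrace A)
    (hfree : ∀ a : A, a ≠ 0 → ¬ IsOfFinAddOrder a) {n K : ℕ}
    (hrn : rightStarSeries A n = {0}) (hK : leftStarSeries A K = {0}) :
    ∀ j, j ≤ n → rightStarSeries A (n - j) ⊆ zetaNat A j := by
  intro j
  induction j with
  | zero =>
    intro _
    rw [Nat.sub_zero, hrn]
    intro x hx
    exact hx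
  | succ j ih =>
    intro hj x hx
    have hxk : x ∈ leftKer (zetaNat A j) := by
      intro b
      apply ih (by omega)
      have harith : n - j = (n - (j+1)) + 1 := by omega
      rw [harith]
      show _ ∈ ((setStar (rightStarSeries A (n-(j+1))) (Set.univ : Set A) : AddSubgroup A) : Set A)
      exact AddSubgroup.subset_closure ⟨x, hx, b, trivial, rfl⟩
    exact leftKer_subset_nextCenter hT hK (IsIdeal.zetaNat j) (tf_zetaNat hK hfree j) hxk

end MainLemma
section Zeta2

variable {A : Type u} [LeftBrace A]

theorem zeta1_star_left {c : A} (hc : c ∈ zetaNat A 1) (x : A) : bstar c x = 0 :=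
  (hc x).1

theorem zeta1_star_right {c : A} (hc : c ∈ zetaNat A 1) (x : A) : bstar x c = 0 :=
  (hc x).2

theorem mem_zeta1_of (z : A) (h : ∀ x, bstar z x = 0 ∧ bstar x z = 0) :
    z ∈ zetaNat A 1 :=
  fun x => ⟨(h x).1, (h x).2⟩

/-- Adding a central element does not change left stars. -/
theorem star_add_central {c : A} (hc : c ∈ zetaNat A 1) (u b : A) :
    bstar (u + c) b = bstar u b := by
  have hZ1 : IsIdeal (zetaNat A 1) := IsIdeal.zetaNat 1
  have hd : lam u⁻¹ c ∈ zetaNat A 1 := hZ1.lam_mem u⁻¹ hc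
  rw [star_add_left_eq u c b, zeta1_star_left hd b, star_zero]
  abel

/-- Left stars are additive on the second center. -/
theorem zeta2_star_add_left {u v : A} (hu : u ∈ nextCenter A (zetaNat A 1))
    (hv : v ∈ nextCenter A (zetaNat A 1)) (x : A) :
    bstar (u + v) x = bstar u x + bstar v x := by
  have hZ1 : IsIdeal (zetaNat A 1) := IsIdeal.zetaNat 1
  have hc : -(bstar u v) ∈ zetaNat A 1 := hZ1.neg_mem' ((hu v).1)
  have huv : u + v = u * v + -(bstar u v) := by
    have := mul_eq u v
    linear_combination (norm := abel) -this
  rw [huv, star_add_central hc, star_mul_left, zeta1_star_right ((hv x).1) u]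
  abel

theorem zeta2_star_neg_left {u : A} (hu : u ∈ nextCenter A (zetaNat A 1)) (x : A) :
    bstar (-u) x = -(bstar u x) := by
  have hZ1 : IsIdeal (zetaNat A 1) := IsIdeal.zetaNat 1
  have hnu : -u ∈ nextCenter A (zetaNat A 1) := neg_mem_nextCenter hZ1 hu
  have h := zeta2_star_add_left hu hnu x
  rw [add_neg_cancel, zero_star] at h
  linear_combination (norm := abel) -h

theorem zeta2_star_nsmul_left {u : A} (hu : u ∈ nextCenter A (zetaNat A 1)) (x : A) :
    ∀ m : ℕ, bstar (m • u) x = m • bstar u x := by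
  have hZ1 : IsIdeal (zetaNat A 1) := IsIdeal.zetaNat 1
  have hsg := (hZ1.nextCenter).subbrace.addSubgroup
  intro m
  induction m with
  | zero => rw [zero_smul, zero_star, zero_smul]
  | succ m ih =>
    have hmu : m • u ∈ nextCenter A (zetaNat A 1) :=
      AddSubgroup.nsmul_mem (hZ1.nextCenter).subbrace.addSubgroup hu m
    rw [succ_nsmul, zeta2_star_add_left hmu hu, ih, succ_nsmul]

theorem zeta2_star_zsmul_left {u : A} (hu : u ∈ nextCenter A (zetaNat A 1)) (x : A) :
    ∀ m : ℤ, bstar (m • u) x = m • bstar u x := by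
  intro m
  rcases le_or_gt 0 m with h | h
  · lift m to ℕ using h
    rw [natCast_zsmul, zeta2_star_nsmul_left hu x, natCast_zsmul]
  · obtain ⟨j, hj⟩ : ∃ j : ℕ, m = -(j : ℤ) := ⟨m.natAbs, by omega⟩
    have hju : (j:ℕ) • u ∈ nextCenter A (zetaNat A 1) :=
      AddSubgroup.nsmul_mem ((IsIdeal.zetaNat 1 (A:=A)).nextCenter).subbrace.addSubgroup hu j
    rw [hj, neg_zsmul, natCast_zsmul, zeta2_star_neg_left hju,
      zeta2_star_nsmul_left hu, neg_zsmul, natCast_zsmul]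

end Zeta2
section Lemma2

variable {A : Type u} [LeftBrace A]

/-- **Second center collapses.** In a T-brace with torsion-free addition and
nilpotent left star series, `ζ₂(⋆,A) ⊆ ζ₁(⋆,A)`. -/
theorem nextCenter_zeta1_subset (hT : IsTBrace A) {K : ℕ}
    (hK : leftStarSeries A K = {0})
    (hfree : ∀ a : A, a ≠ 0 → ¬ IsOfFinAddOrder a) :
    nextCenter A (zetaNat A 1) ⊆ zetaNat A 1 := by
  have hZ1 : IsIdeal (zetaNat A 1) := IsIdeal.zetaNat 1
  have htf1 : TFRel (zetaNat A 1) := tf_zetaNat hK hfree 1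
  have htf0 : TFRel ({0} : Set A) := tf_zero hfree
  intro z hz2
  by_cases hzZ : z ∈ zetaNat A 1
  · exact hzZ
  obtain ⟨e, hedef⟩ : ∃ e, e = bstar z z := ⟨_, rfl⟩
  have heZ : e ∈ zetaNat A 1 := by rw [hedef]; exact (hz2 z).1
  have key : ∀ n : ℕ, 1 ≤ n → ∀ a : A,
      (∃ k : ℤ, bstar a z = (k * n) • e) ∧ (∃ k : ℤ, bstar z a = (k * n) • e) := by
    intro n hn a
    have hN0 : (n : ℤ) ≠ 0 := Int.natCast_ne_zero.2 (by omega)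
    obtain ⟨w, hwdef⟩ : ∃ w : A, w = (n : ℤ) • z := ⟨_, rfl⟩
    obtain ⟨f, hfdef⟩ : ∃ f : A, f = ((n : ℤ)^2) • e := ⟨_, rfl⟩
    have hfZ : f ∈ zetaNat A 1 := by rw [hfdef]; exact hZ1.zsmul_mem heZ _
    have hzf : bstar z f = 0 := zeta1_star_right hfZ z
    have hzw : bstar z w = (n:ℤ) • e := by rw [hwdef, star_zsmul, ← hedef]
    have beta : ∀ (m : ℤ) {c : A}, c ∈ zetaNat A 1 →
        ∀ x, bstar (m • w + c) x = (m * n) • bstar z x := by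
      intro m c hc x
      rw [star_add_central hc, hwdef, smul_smul, zeta2_star_zsmul_left hz2 x (m * n)]
    set J : Set A := {x | ∃ m : ℤ, ∃ c ∈ zetaNat A 1, x = m • w + c} with hJdef
    set I : Set A := {x | ∃ m k : ℤ, x = m • w + k • f} with hIdef
    have hZ1J : zetaNat A 1 ⊆ J := fun x hx => ⟨0, x, hx, by simp⟩
    have hIJ' : I ⊆ J := by
      rintro x ⟨m, k, rfl⟩
      exact ⟨m, k • f, hZ1.zsmul_mem hfZ k, rfl⟩
    have hJstar : ∀ x ∈ J, ∀ b : A, bstar x b ∈ zetaNat A 1 := by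
      rintro x ⟨m, c, hc, rfl⟩ b
      rw [beta m hc b]
      exact hZ1.zsmul_mem ((hz2 b).1) _
    have hJsub : IsSubbrace J := by
      constructor
      · exact ⟨0, 0, hZ1.zero_mem', by simp⟩
      · rintro x y ⟨m, c, hc, rfl⟩ ⟨m', c', hc', rfl⟩
        exact ⟨m + m', c + c', hZ1.add_mem' hc hc', by module⟩
      · rintro x ⟨m, c, hc, rfl⟩
        exact ⟨-m, -c, hZ1.neg_mem' hc, by module⟩
      · rintro x y hx hy
        obtain ⟨m, c, hc, rfl⟩ := hx
        obtain ⟨m', c', hc', rfl⟩ := hy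
        have hst : bstar (m • w + c) (m' • w + c') ∈ zetaNat A 1 :=
          hJstar _ ⟨m, c, hc, rfl⟩ _
        refine ⟨m + m', c + c' + bstar (m • w + c) (m' • w + c'),
          hZ1.add_mem' (hZ1.add_mem' hc hc') hst, ?_⟩
        rw [mul_eq]
        module
      · rintro x ⟨m, c, hc, rfl⟩
        have hst : bstar (m • w + c) (m • w + c)⁻¹ ∈ zetaNat A 1 :=
          hJstar _ ⟨m, c, hc, rfl⟩ _
        refine ⟨-m, -c - bstar (m • w + c) (m • w + c)⁻¹,
          hZ1.sub_mem' (hZ1.neg_mem' hc) hst, ?_⟩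
        have h := inv_eq (m • w + c)
        linear_combination (norm := module) h
    have hJ : IsIdeal J := by
      refine ⟨Set.subset_univ _, hJsub, IsSubbrace.univ, ?_, ?_⟩
      · rintro a' - x ⟨m, c, hc, rfl⟩
        refine hZ1J ?_
        have h1 : bstar a' (m • w + c) = m • ((n:ℤ) • bstar a' z) := by
          rw [star_add, zeta1_star_right hc a', star_zsmul, hwdef, star_zsmul, add_zero]
        rw [h1]
        exact hZ1.zsmul_mem (hZ1.zsmul_mem ((hz2 a').2) _) m
      · rintro a' - x hx
        exact hZ1J (hJstar x hx a')
    have hzI : ∀ m k : ℤ, bstar z (m • w + k • f) = (m * n) • e := by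
      intro m k
      rw [star_add, star_zsmul, star_zsmul, hzw, hzf]
      module
    have hIstar : ∀ m k m' k' : ℤ,
        bstar (m • w + k • f) (m' • w + k' • f) = (m * m') • f := by
      intro m k m' k'
      rw [beta m (hZ1.zsmul_mem hfZ k), hzI m' k', hfdef]
      module
    have hIsub : IsSubbrace I := by
      constructor
      · exact ⟨0, 0, by simp⟩
      · rintro x y ⟨m, k, rfl⟩ ⟨m', k', rfl⟩
        exact ⟨m + m', k + k', by module⟩
      · rintro x ⟨m, k, rfl⟩
        exact ⟨-m, -k, by module⟩
      · rintro x y ⟨m, k, rfl⟩ ⟨m', k', rfl⟩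
        refine ⟨m + m', k + k' + m * m', ?_⟩
        rw [mul_eq, hIstar m k m' k']
        module
      · rintro x ⟨m, k, rfl⟩
        refine ⟨-m, m * m - k, ?_⟩
        have hprod : (m • w + k • f) * ((-m) • w + (m * m - k) • f) = 1 := by
          rw [mul_eq, hIstar m k (-m) (m*m-k), one_eq_zero]
          module
        exact (eq_inv_of_mul_eq_one_right hprod).symm
    have hIJ : IsIdealIn I J := by
      refine ⟨hIJ', hIsub, hJsub, ?_, ?_⟩
      · rintro a' ⟨m', c, hc, rfl⟩ x ⟨m, k, rfl⟩
        refine ⟨0, m' * m, ?_⟩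
        rw [beta m' hc, hzI m k, hfdef]
        module
      · rintro a' ⟨m', c, hc, rfl⟩ x ⟨m, k, rfl⟩
        refine ⟨0, m * m', ?_⟩
        rw [beta m (hZ1.zsmul_mem hfZ k), star_add, zeta1_star_right hc z,
          star_zsmul, hzw, hfdef]
        module
    have hI : IsIdeal I := hT I J hIJ hJ
    have hwI : w ∈ I := ⟨1, 0, by module⟩
    constructor
    · -- a ⋆ z
      obtain ⟨m, k, hmk⟩ := hI.star_left a hwI
      have haw : bstar a w = (n:ℤ) • bstar a z := by rw [hwdef, star_zsmul]
      rw [haw] at hmk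
      have hmzZ : (m * n) • z ∈ zetaNat A 1 := by
        have h2 : (m * n) • z = (n:ℤ) • bstar a z - k • f := by
          rw [hmk, hwdef]; module
        rw [h2]
        exact hZ1.sub_mem' (hZ1.zsmul_mem ((hz2 a).2) _) (hZ1.zsmul_mem hfZ k)
      have hm : m = 0 := by
        by_contra hne
        exact hzZ (htf1 z (m * n) (by
          simp only [ne_eq, mul_eq_zero, not_or]
          exact ⟨hne, hN0⟩) hmzZ)
      refine ⟨k, ?_⟩
      have hx : (n:ℤ) • (bstar a z - (k * n) • e) = 0 := by
        rw [hm] at hmk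
        rw [smul_sub, hmk, hfdef]
        module
      have := htf0 _ (n:ℤ) hN0 hx
      rw [Set.mem_singleton_iff, sub_eq_zero] at this
      exact this
    · -- z ⋆ a
      obtain ⟨m, k, hmk⟩ := hI.star_right a hwI
      have hwa : bstar w a = (n:ℤ) • bstar z a := by
        rw [hwdef, zeta2_star_zsmul_left hz2 a]
      rw [hwa] at hmk
      have hmzZ : (m * n) • z ∈ zetaNat A 1 := by
        have h2 : (m * n) • z = (n:ℤ) • bstar z a - k • f := by
          rw [hmk, hwdef]; module
        rw [h2]
        exact hZ1.sub_mem' (hZ1.zsmul_mem ((hz2 a).1) _) (hZ1.zsmul_mem hfZ k)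
      have hm : m = 0 := by
        by_contra hne
        exact hzZ (htf1 z (m * n) (by
          simp only [ne_eq, mul_eq_zero, not_or]
          exact ⟨hne, hN0⟩) hmzZ)
      refine ⟨k, ?_⟩
      have hx : (n:ℤ) • (bstar z a - (k * n) • e) = 0 := by
        rw [hm] at hmk
        rw [smul_sub, hmk, hfdef]
        module
      have := htf0 _ (n:ℤ) hN0 hx
      rw [Set.mem_singleton_iff, sub_eq_zero] at this
      exact this
  -- finish: deduce `z` is central
  have finish1 : ∀ y : A, (∀ n : ℕ, 1 ≤ n → ∃ k : ℤ, y = (k * n) • e) → y = 0 := by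
    intro y hy
    obtain ⟨k₁, hk₁⟩ := hy 1 le_rfl
    by_cases he : e = 0
    · rw [hk₁, he, smul_zero]
    · obtain ⟨k, hk⟩ := hy (k₁.natAbs + 1) (by omega)
      have hk₁' : y = k₁ • e := by rw [hk₁]; norm_num
      have hdiff : (k₁ - k * ((k₁.natAbs + 1 : ℕ) : ℤ)) • e = 0 := by
        rw [sub_smul, ← hk₁', ← hk, sub_self]
      have hcoef : k₁ - k * ((k₁.natAbs + 1 : ℕ) : ℤ) = 0 := by
        by_contra hne
        exact he (htf0 e _ hne hdiff)
      have h2 : k₁ = k * ((k₁.natAbs + 1 : ℕ) : ℤ) := by omega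
      have hk₁0 : k₁ = 0 := by
        rcases eq_or_ne k 0 with hk0 | hk0
        · rw [hk0, zero_mul] at h2; exact h2
        · exfalso
          have h1 : k₁.natAbs = k.natAbs * (k₁.natAbs + 1) := by
            have h1' := congrArg Int.natAbs h2
            rwa [Int.natAbs_mul, Int.natAbs_natCast] at h1'
          have h3 : 0 < k.natAbs := Nat.pos_of_ne_zero (Int.natAbs_ne_zero.2 hk0)
          have h4 : k₁.natAbs + 1 ≤ k.natAbs * (k₁.natAbs + 1) :=
            Nat.le_mul_of_pos_left _ h3
          omega
      rw [hk₁', hk₁0, zero_smul]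
  exact mem_zeta1_of z (fun x =>
    ⟨finish1 _ (fun n hn => (key n hn x).2), finish1 _ (fun n hn => (key n hn x).1)⟩)

end Lemma2
end LeftBrace

open LeftBrace in
/-- **Corollary 2.** A Smoktunowicz-nilpotent T-brace with torsion-free additive group
is abelian. -/
theorem abelian_of_isSmoktunowiczNilpotent_of_torsionFree
    {A : Type u} [LeftBrace A] (hT : IsTBrace A)
    (hfree : ∀ a : A, a ≠ 0 → ¬ IsOfFinAddOrder a)
    (hSN : IsSmoktunowiczNilpotent A) :
    ∀ a b : A, bstar a b = 0 := by
  obtain ⟨n, K, hrn, hK⟩ := hSN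
  intro a b
  -- every element lies in the n-th term of the upper ⋆-central series
  have hzall : ∀ x : A, x ∈ zetaNat A n := by
    intro x
    have h := rss_subset_zetaNat hT hfree hrn hK n le_rfl
    rw [Nat.sub_self] at h
    exact h (Set.mem_univ x)
  -- the series stabilizes at the first center
  have hsub1 : ∀ j, 1 ≤ j → zetaNat A j ⊆ zetaNat A 1 := by
    intro j
    induction j with
    | zero => intro h; exact absurd h (by omega)
    | succ j ih =>
      intro _
      rcases Nat.eq_zero_or_pos j with hj0 | hj1
      · rw [hj0]
      · intro x hx
        have hx1 : x ∈ nextCenter A (zetaNat A 1) :=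
          fun y => ⟨ih hj1 ((hx y).1), ih hj1 ((hx y).2)⟩
        exact nextCenter_zeta1_subset hT hK hfree hx1
  rcases Nat.eq_zero_or_pos n with hn0 | hn1
  · have ha : a = 0 := by
      have h := hzall a
      rw [hn0] at h
      exact h
    have hb : b = 0 := by
      have h := hzall b
      rw [hn0] at h
      exact h
    rw [ha, hb, zero_star]
  · exact zeta1_star_left (hsub1 n hn1 (hzall a)) b
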